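/- No local filter can map a finite tensor power of the state ρ_ε = (1−ε) σ' + ε 𝟙/d exactly onto the pure entangled state σ': there exist no operators A, B and integer N with (A ⊗ B) ρ_ε^{⊗N} (A ⊗ B)† = σ', for 0 < ε < 1. -/

import Mathlib

open Matrix Kronecker
open scoped ComplexOrder

/-- Projector onto a vector. -/
noncomputable def proj {n : Type*} (v : n → ℂ) : Matrix n n ℂ :=
  Matrix.of fun i j => v i * star (v j)

/-- `N`-fold tensor power of a matrix, on the index type `Fin N → n`. -/
noncomputable def tensorPow {n : Type*} [Fintype n] (ρ : Matrix n n ℂ) (N : ℕ) :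
    Matrix (Fin N → n) (Fin N → n) ℂ :=
  Matrix.of fun f g => ∏ k, ρ (f k) (g k)

/-- Reindexing `(Fin N → A × B) ≃ (Fin N → A) × (Fin N → B)`. -/
def splitIdx (A B : Type*) (N : ℕ) :
    (Fin N → A × B) ≃ (Fin N → A) × (Fin N → B) :=
  Equiv.arrowProdEquivProdArrow (Fin N) (fun _ => A) (fun _ => B)

section aux
variable {n : Type*} [Fintype n] [DecidableEq n]
set_option linter.unusedSectionVars false

open MatrixOrder Matrix.Norms.L2Operator in
lemma posSemidef_iff_eq_transpose_mul_self {m : Type*} [Fintype m] [DecidableEq m]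
    {A : Matrix m m ℂ} : A.PosSemidef ↔ ∃ B : Matrix m m ℂ, A = Bᴴ * B := by
  constructor
  · intro h
    obtain ⟨B, hB⟩ := CStarAlgebra.nonneg_iff_eq_star_mul_self.mp (nonneg_iff_posSemidef.mpr h)
    exact ⟨B, hB⟩
  · rintro ⟨B, rfl⟩
    exact posSemidef_conjTranspose_mul_self B

lemma tensorPow_mul (M N' : Matrix n n ℂ) (N : ℕ) :
    tensorPow (M * N') N = tensorPow M N * tensorPow N' N := by
  ext f g
  simp only [tensorPow, Matrix.mul_apply, of_apply]
  rw [Fintype.prod_sum]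
  exact Finset.sum_congr rfl fun h _ => Finset.prod_mul_distrib

lemma tensorPow_conjTranspose (M : Matrix n n ℂ) (N : ℕ) :
    (tensorPow M N)ᴴ = tensorPow Mᴴ N := by
  ext f g
  simp [tensorPow, conjTranspose_apply, star_prod]

lemma tensorPow_posSemidef {M : Matrix n n ℂ} (hM : M.PosSemidef) (N : ℕ) :
    (tensorPow M N).PosSemidef := by
  obtain ⟨C, rfl⟩ := posSemidef_iff_eq_transpose_mul_self.mp hM
  rw [tensorPow_mul, ← tensorPow_conjTranspose]
  exact posSemidef_conjTranspose_mul_self _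

lemma tensorPow_smul_one (c : ℂ) (N : ℕ) :
    tensorPow (c • (1 : Matrix n n ℂ)) N = (c ^ N) • (1 : Matrix (Fin N → n) (Fin N → n) ℂ) := by
  ext f g
  simp only [tensorPow, of_apply, Matrix.smul_apply, smul_eq_mul]
  rcases eq_or_ne f g with h | h
  · subst h
    simp [one_apply, Finset.prod_const]
  · obtain ⟨k, hk⟩ := Function.ne_iff.mp h
    rw [Finset.prod_eq_zero (Finset.mem_univ k) (by simp [one_apply, hk]),
      one_apply_ne h, mul_zero]

lemma tensorPow_succ (M : Matrix n n ℂ) (N : ℕ) :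
    tensorPow M (N + 1)
      = (M ⊗ₖ tensorPow M N).submatrix
          (fun f : Fin (N+1) → n => (f 0, fun k : Fin N => f k.succ))
          (fun f : Fin (N+1) → n => (f 0, fun k : Fin N => f k.succ)) := by
  ext f g
  simp [tensorPow, Fin.prod_univ_succ]

lemma kron_conjTranspose {m l p q : Type*} (A : Matrix m l ℂ) (B : Matrix p q ℂ) :
    (A ⊗ₖ B)ᴴ = Aᴴ ⊗ₖ Bᴴ := by
  ext ⟨i, j⟩ ⟨k, l'⟩
  simp [conjTranspose_apply, mul_comm]

lemma posSemidef_kronecker {m p : Type*} [Fintype m] [Fintype p] [DecidableEq m] [DecidableEq p]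
    {M : Matrix m m ℂ} {P : Matrix p p ℂ} (hM : M.PosSemidef) (hP : P.PosSemidef) :
    (M ⊗ₖ P).PosSemidef := by
  obtain ⟨C, rfl⟩ := posSemidef_iff_eq_transpose_mul_self.mp hM
  obtain ⟨D, rfl⟩ := posSemidef_iff_eq_transpose_mul_self.mp hP
  rw [Matrix.mul_kronecker_mul, ← kron_conjTranspose]
  exact posSemidef_conjTranspose_mul_self _

lemma tensorPow_mono {M M' : Matrix n n ℂ} (hM' : M'.PosSemidef)
    (hd : (M - M').PosSemidef) (N : ℕ) :
    (tensorPow M N - tensorPow M' N).PosSemidef := by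
  have hM : M.PosSemidef := by
    have := hd.add hM'
    rwa [sub_add_cancel] at this
  induction N with
  | zero =>
      have h0 : tensorPow M 0 = tensorPow M' 0 := by ext f g; simp [tensorPow]
      rw [h0, sub_self]
      exact Matrix.PosSemidef.zero
  | succ N ih =>
      have key : M ⊗ₖ tensorPow M N - M' ⊗ₖ tensorPow M' N
          = (M - M') ⊗ₖ tensorPow M N + M' ⊗ₖ (tensorPow M N - tensorPow M' N) := by
        ext ⟨i, j⟩ ⟨k, l⟩
        simp only [Matrix.sub_apply, Matrix.add_apply, kroneckerMap_apply]
        ring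
      have h2 : (M ⊗ₖ tensorPow M N - M' ⊗ₖ tensorPow M' N).PosSemidef := by
        rw [key]
        exact (posSemidef_kronecker hd (tensorPow_posSemidef hM N)).add
          (posSemidef_kronecker hM' ih)
      have hmat : tensorPow M (N + 1) - tensorPow M' (N + 1)
          = (M ⊗ₖ tensorPow M N - M' ⊗ₖ tensorPow M' N).submatrix
              (fun f : Fin (N+1) → n => (f 0, fun k : Fin N => f k.succ))
              (fun f : Fin (N+1) → n => (f 0, fun k : Fin N => f k.succ)) := by
        ext f g
        simp [tensorPow_succ, Matrix.sub_apply]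
      rw [hmat]
      exact h2.submatrix _

lemma proj_mulVec (v x : n → ℂ) : proj v *ᵥ x = (star v ⬝ᵥ x) • v := by
  funext i
  simp only [proj, mulVec, dotProduct, of_apply, Pi.smul_apply, smul_eq_mul, Finset.sum_mul,
    Pi.star_apply]
  exact Finset.sum_congr rfl fun j _ => by ring

lemma proj_posSemidef (v : n → ℂ) : (proj v).PosSemidef := by
  refine Matrix.PosSemidef.of_dotProduct_mulVec_nonneg ?_ (fun x => ?_)
  · ext i j
    simp [proj, conjTranspose_apply, mul_comm]
  · rw [proj_mulVec, dotProduct_smul, smul_eq_mul]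
    have h1 : star x ⬝ᵥ v = star (star v ⬝ᵥ x) := by
      rw [star_dotProduct]
    rw [mul_comm, h1]
    exact star_mul_self_nonneg _

lemma dominated_by_proj (v : n → ℂ) (hv : star v ⬝ᵥ v = 1) {M : Matrix n n ℂ}
    (hM : M.PosSemidef) (hdom : (proj v - M).PosSemidef) :
    M = (star v ⬝ᵥ M *ᵥ v) • proj v := by
  have key : ∀ x : n → ℂ, star v ⬝ᵥ x = 0 → M *ᵥ x = 0 := by
    intro x hx
    have h1 : star x ⬝ᵥ (proj v - M) *ᵥ x = -(star x ⬝ᵥ M *ᵥ x) := by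
      rw [sub_mulVec, dotProduct_sub, proj_mulVec, hx, zero_smul, dotProduct_zero, zero_sub]
    have h2 := hdom.dotProduct_mulVec_nonneg x
    rw [h1] at h2
    have h3 := hM.dotProduct_mulVec_nonneg x
    exact (hM.dotProduct_mulVec_zero_iff x).mp (le_antisymm (neg_nonneg.mp h2) h3)
  have hMv : ∀ x : n → ℂ, M *ᵥ x = (star v ⬝ᵥ x) • (M *ᵥ v) := by
    intro x
    have h0 : star v ⬝ᵥ (x - (star v ⬝ᵥ x) • v) = 0 := by
      rw [dotProduct_sub, dotProduct_smul, hv, smul_eq_mul, mul_one, sub_self]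
    have h1 := key _ h0
    rw [mulVec_sub, mulVec_smul, sub_eq_zero] at h1
    exact h1
  set w := M *ᵥ v with hw
  set lam := star v ⬝ᵥ w with hlam
  have hz : w = lam • v := by
    set z := w - lam • v with hzdef
    have hzv : star v ⬝ᵥ z = 0 := by
      rw [hzdef, dotProduct_sub, dotProduct_smul, hv, smul_eq_mul, mul_one, hlam, sub_self]
    have hMz : M *ᵥ z = 0 := key z hzv
    have h4 : star z ⬝ᵥ w = 0 := by
      rw [hw, dotProduct_mulVec]
      have hvm : star z ᵥ* M = star (M *ᵥ z) := by
        conv_lhs => rw [← hM.1]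
        exact (star_mulVec M z).symm
      rw [hvm, hMz, star_zero, zero_dotProduct]
    have h5 : star z ⬝ᵥ v = 0 := by
      rw [star_dotProduct, hzv, star_zero]
    have h6 : star z ⬝ᵥ z = 0 := by
      calc star z ⬝ᵥ z = star z ⬝ᵥ (w - lam • v) := rfl
        _ = star z ⬝ᵥ w - lam * (star z ⬝ᵥ v) := by
            rw [dotProduct_sub, dotProduct_smul, smul_eq_mul]
        _ = 0 := by rw [h4, h5, mul_zero, sub_zero]
    have := dotProduct_star_self_eq_zero.mp h6
    rw [hzdef, sub_eq_zero] at this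
    exact this
  ext i k
  have h7 := congrFun (hMv (Pi.single k 1)) i
  rw [hz] at h7
  simp only [Pi.smul_apply, smul_eq_mul] at h7
  have h8 : star v ⬝ᵥ Pi.single k 1 = star (v k) := by
    rw [dotProduct_single, mul_one, Pi.star_apply]
  rw [mulVec_single] at h7
  simp only [MulOpposite.op_one, one_smul, col_apply] at h7
  rw [h8] at h7
  rw [h7]
  simp only [Matrix.smul_apply, proj, of_apply, smul_eq_mul]
  ring


end aux

lemma posSemidef_real_smul {n : Type*} [Fintype n] {M : Matrix n n ℂ} (hM : M.PosSemidef)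
    {r : ℝ} (hr : 0 ≤ r) : ((r : ℂ) • M).PosSemidef := by
  refine Matrix.PosSemidef.of_dotProduct_mulVec_nonneg ?_ (fun x => ?_)
  · rw [Matrix.IsHermitian, Matrix.conjTranspose_smul, hM.1, RCLike.star_def,
      Complex.conj_ofReal]
  · rw [Matrix.smul_mulVec, dotProduct_smul, smul_eq_mul]
    exact mul_nonneg (by exact_mod_cast hr) (hM.dotProduct_mulVec_nonneg x)


theorem no_perfect_distillation {dA dB : ℕ} (hdA : 1 ≤ dA) (hdB : 1 ≤ dB)
    (ψ : Fin dA × Fin dB → ℂ) (hψ : ∑ i, ‖ψ i‖ ^ 2 = 1)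
    (hent : ¬ ∃ (a : Fin dA → ℂ) (b : Fin dB → ℂ), ∀ i j, ψ (i, j) = a i * b j)
    (ε : ℝ) (hε0 : 0 < ε) (hε1 : ε < 1) :
    ¬ ∃ (N : ℕ) (A : Matrix (Fin dA) (Fin N → Fin dA) ℂ)
        (B : Matrix (Fin dB) (Fin N → Fin dB) ℂ),
      (A ⊗ₖ B) *
        ((tensorPow (((1 - ε : ℝ) : ℂ) • proj ψ +
            ((ε / (dA * dB) : ℝ) : ℂ) • (1 : Matrix (Fin dA × Fin dB) (Fin dA × Fin dB) ℂ)) N).submatrix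
          (fun p : (Fin N → Fin dA) × (Fin N → Fin dB) => (splitIdx (Fin dA) (Fin dB) N).symm p)
          (fun p : (Fin N → Fin dA) × (Fin N → Fin dB) => (splitIdx (Fin dA) (Fin dB) N).symm p)) *
        (A ⊗ₖ B)ᴴ
      = proj ψ := by
  rintro ⟨N, A, B, hAB⟩
  classical
  set c : ℝ := ε / (dA * dB) with hcdef
  have hdApos : (0:ℝ) < dA := by exact_mod_cast hdA
  have hdBpos : (0:ℝ) < dB := by exact_mod_cast hdB
  have hcpos : 0 < c := div_pos hε0 (by positivity)
  set ρ : Matrix (Fin dA × Fin dB) (Fin dA × Fin dB) ℂ :=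
    ((1 - ε : ℝ) : ℂ) • proj ψ + ((c : ℝ) : ℂ) • 1 with hρdef
  set R : Matrix ((Fin N → Fin dA) × (Fin N → Fin dB))
      ((Fin N → Fin dA) × (Fin N → Fin dB)) ℂ :=
    (tensorPow ρ N).submatrix
      (fun p : (Fin N → Fin dA) × (Fin N → Fin dB) => (splitIdx (Fin dA) (Fin dB) N).symm p)
      (fun p : (Fin N → Fin dA) × (Fin N → Fin dB) => (splitIdx (Fin dA) (Fin dB) N).symm p)
    with hRdef
  set s : ℂ := ((c : ℝ) : ℂ) with hsdef
  -- PSD facts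
  have hprojPSD : (proj ψ).PosSemidef := proj_posSemidef ψ
  have hd1 : (ρ - s • 1).PosSemidef := by
    have h1 : ρ - s • 1 = ((1 - ε : ℝ) : ℂ) • proj ψ := by
      rw [hρdef]; exact add_sub_cancel_right _ _
    rw [h1]
    exact posSemidef_real_smul hprojPSD (by linarith)
  have hs1 : (s • (1 : Matrix (Fin dA × Fin dB) (Fin dA × Fin dB) ℂ)).PosSemidef :=
    posSemidef_real_smul Matrix.PosSemidef.one hcpos.le
  have hbig : (tensorPow ρ N - (s ^ N) • 1).PosSemidef := by
    have := tensorPow_mono hs1 hd1 N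
    rwa [tensorPow_smul_one] at this
  have hRps : (R - (s ^ N) • 1).PosSemidef := by
    have hRsub : R - (s ^ N) • 1
        = (tensorPow ρ N - (s ^ N) • 1).submatrix
            (fun p : (Fin N → Fin dA) × (Fin N → Fin dB) => (splitIdx (Fin dA) (Fin dB) N).symm p)
            (fun p : (Fin N → Fin dA) × (Fin N → Fin dB) => (splitIdx (Fin dA) (Fin dB) N).symm p) := by
      ext p q
      by_cases h : p = q
      · subst h; simp [hRdef]
      · have h2 : (splitIdx (Fin dA) (Fin dB) N).symm p ≠ (splitIdx (Fin dA) (Fin dB) N).symm q :=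
          fun hc => h ((splitIdx (Fin dA) (Fin dB) N).symm.injective hc)
        simp [hRdef, Matrix.one_apply_ne h, Matrix.one_apply_ne h2]
    rw [hRsub]
    exact hbig.submatrix _
  set K : Matrix (Fin dA × Fin dB) (Fin dA × Fin dB) ℂ := (A ⊗ₖ B) * (A ⊗ₖ B)ᴴ with hKdef
  have hKps : K.PosSemidef := Matrix.posSemidef_self_mul_conjTranspose _
  have hconj : (proj ψ - (s ^ N) • K).PosSemidef := by
    have h := hRps.mul_mul_conjTranspose_same (A ⊗ₖ B)
    have heq : (A ⊗ₖ B) * (R - (s ^ N) • 1) * (A ⊗ₖ B)ᴴ = proj ψ - (s ^ N) • K := by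
      rw [Matrix.mul_sub, Matrix.sub_mul, hAB, Matrix.mul_smul, Matrix.mul_one,
        Matrix.smul_mul, hKdef]
    rwa [heq] at h
  have hsK : ((s ^ N) • K).PosSemidef := by
    have hcast : s ^ N = ((c ^ N : ℝ) : ℂ) := by rw [hsdef]; push_cast; ring
    rw [hcast]
    exact posSemidef_real_smul hKps (by positivity)
  -- normalization
  have hψ1 : star ψ ⬝ᵥ ψ = 1 := by
    have h : ∀ z : ℂ, star z * z = ((‖z‖ ^ 2 : ℝ) : ℂ) := by
      intro z
      rw [RCLike.star_def, mul_comm, Complex.mul_conj]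
      norm_cast
      rw [Complex.normSq_eq_norm_sq]
    calc star ψ ⬝ᵥ ψ = ∑ i, ((‖ψ i‖ ^ 2 : ℝ) : ℂ) := by
          simp only [dotProduct, Pi.star_apply]
          exact Finset.sum_congr rfl fun i _ => h (ψ i)
      _ = ((∑ i, ‖ψ i‖ ^ 2 : ℝ) : ℂ) := (Complex.ofReal_sum _ _).symm
      _ = 1 := by rw [hψ, Complex.ofReal_one]
  have hdomeq := dominated_by_proj ψ hψ1 hsK hconj
  set lam : ℂ := star ψ ⬝ᵥ ((s ^ N) • K) *ᵥ ψ with hlamdef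
  have hψne : ∃ p, ψ p ≠ 0 := by
    by_contra h
    push_neg at h
    simp [h] at hψ
  obtain ⟨⟨i0, j0⟩, hp0⟩ := hψne
  have hsn : s ^ N ≠ 0 := pow_ne_zero _ (by
    rw [hsdef]
    exact_mod_cast hcpos.ne')
  rcases eq_or_ne lam 0 with hl | hl
  · rw [hl, zero_smul] at hdomeq
    have hK0 : K = 0 := by
      rcases smul_eq_zero.mp hdomeq with h | h
      · exact absurd h hsn
      · exact h
    have hAB0 : A ⊗ₖ B = 0 := Matrix.self_mul_conjTranspose_eq_zero.mp (hKdef ▸ hK0)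
    rw [hAB0, Matrix.zero_mul, Matrix.zero_mul] at hAB
    have h00 : proj ψ (i0, j0) (i0, j0) = 0 := by rw [← hAB]; rfl
    rw [show proj ψ (i0, j0) (i0, j0) = ψ (i0, j0) * star (ψ (i0, j0)) from rfl] at h00
    rcases mul_eq_zero.mp h00 with h | h
    · exact hp0 h
    · exact hp0 (star_eq_zero.mp h)
  · have hKfact : K = (A * Aᴴ) ⊗ₖ (B * Bᴴ) := by
      rw [hKdef, kron_conjTranspose, ← Matrix.mul_kronecker_mul]
    have hent' : ∀ i j,
        s ^ N * ((A * Aᴴ) i i0 * (B * Bᴴ) j j0)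
          = lam * (ψ (i, j) * star (ψ (i0, j0))) := by
      intro i j
      have h := congrFun (congrFun hdomeq (i, j)) (i0, j0)
      simpa [hKfact, Matrix.smul_apply, smul_eq_mul, proj] using h
    apply hent
    have hden : lam * star (ψ (i0, j0)) ≠ 0 := mul_ne_zero hl (star_ne_zero.mpr hp0)
    refine ⟨fun i => s ^ N * (A * Aᴴ) i i0 / (lam * star (ψ (i0, j0))),
      fun j => (B * Bᴴ) j j0, fun i j => ?_⟩
    have h := hent' i j
    rw [div_mul_eq_mul_div, eq_div_iff hden]
    linear_combination -h
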